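/- Let f : V → V → A be antisymmetric with divergence zero at every vertex (∑_{u ∈ V} f u v = 0 for all v ∈ V), and let H be the support graph of f. Then there exist a natural number k, closed walks c₁, …, c_k of H each of which is a cycle, and elements γ₁, …, γ_k ∈ A, such that f is the pointwise sum of the cycle flows: f = ∑_{i=1}^{k} f_{c_i, γ_i}. -/

import Mathlib

/-- The support graph of an antisymmetric function `f : V → V → A`: distinct vertices
`u`, `v` are adjacent iff `f u v ≠ 0`. -/
def supportGraph {V A : Type*} [AddCommGroup A] (f : V → V → A)
    (hanti : ∀ u v, f u v = - f v u) (hdiag : ∀ v, f v v = 0) : SimpleGraph V where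
  Adj u v := f u v ≠ 0
  symm := by
    constructor
    intro u v h
    rw [hanti v u]
    simpa using h
  loopless := by
    constructor
    intro v h
    exact h (hdiag v)

/-- The cycle flow associated with a closed walk `c` and an element `γ`:
`f_{c,γ}(u, v) = (a - b) • γ`, where `a` is the number of darts of `c` from `u` to `v`
and `b` is the number of darts of `c` from `v` to `u`. -/
def cycleFlow {V : Type*} [DecidableEq V] {G : SimpleGraph V} {x : V}
    (c : G.Walk x x) {A : Type*} [AddCommGroup A] (γ : A) : V → V → A :=
  fun u v =>
    (((c.darts.filter (fun d => d.fst = u ∧ d.snd = v)).length : ℤ) -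
      ((c.darts.filter (fun d => d.fst = v ∧ d.snd = u)).length : ℤ)) • γ

open SimpleGraph Finset

section cnt
variable {V : Type*} [DecidableEq V] {G : SimpleGraph V}

private lemma cnt_out_sub_in {s t : V} (p : G.Walk s t) (v : V) :
    ((p.darts.filter (fun d => d.fst = v)).length : ℤ) -
      ((p.darts.filter (fun d => d.snd = v)).length : ℤ) =
    (if s = v then 1 else 0) - (if t = v then 1 else 0) := by
  induction p with
  | nil => simp
  | @cons s w t h q ih =>
    simp only [SimpleGraph.Walk.darts_cons, List.filter_cons]
    by_cases h1 : s = v <;> by_cases h2 : w = v <;> by_cases h3 : t = v <;>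
      simp [h1, h2, h3] at ih ⊢ <;> omega

private lemma sum_cnt {α : Type*} [Fintype V] (l : List α) (g : α → V) (pr : α → Prop)
    [DecidablePred pr] :
    ∑ u : V, (l.filter (fun d => g d = u ∧ pr d)).length = (l.filter pr).length := by
  induction l with
  | nil => simp
  | cons a l ih =>
    by_cases hpa : pr a
    · have key : ∀ u : V, (List.filter (fun d => decide (g d = u ∧ pr d)) (a :: l)).length
          = (List.filter (fun d => decide (g d = u ∧ pr d)) l).length
            + if g a = u then 1 else 0 := by
        intro u; rw [List.filter_cons]; by_cases hgu : g a = u <;> simp [hgu, hpa]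
      rw [Finset.sum_congr rfl fun u _ => key u, Finset.sum_add_distrib, ih,
        Finset.sum_ite_eq]
      simp [hpa, List.filter_cons]
    · have key : ∀ u : V, (List.filter (fun d => decide (g d = u ∧ pr d)) (a :: l)).length
          = (List.filter (fun d => decide (g d = u ∧ pr d)) l).length := by
        intro u; rw [List.filter_cons]; simp [hpa]
      rw [Finset.sum_congr rfl fun u _ => key u, ih, List.filter_cons]
      simp [hpa]
end cnt

section flow
variable {V A : Type*} [DecidableEq V] [AddCommGroup A] {G : SimpleGraph V} {x : V}

private lemma cycleFlow_anti (c : G.Walk x x) (γ : A) (u v : V) :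
    cycleFlow c γ u v = - cycleFlow c γ v u := by
  unfold cycleFlow
  rw [← neg_smul, neg_sub]

private lemma cycleFlow_diag (c : G.Walk x x) (γ : A) (v : V) :
    cycleFlow c γ v v = 0 := by
  unfold cycleFlow
  rw [sub_self, zero_smul]

private lemma cycleFlow_div [Fintype V] (c : G.Walk x x) (γ : A) (v : V) :
    ∑ u : V, cycleFlow c γ u v = 0 := by
  unfold cycleFlow
  rw [← Finset.sum_smul]
  convert zero_smul ℤ γ
  have h1 : ∑ u : V, ((c.darts.filter (fun d => d.fst = u ∧ d.snd = v)).length : ℤ)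
      = ((c.darts.filter (fun d => d.snd = v)).length : ℤ) := by
    rw [← Nat.cast_sum]
    norm_cast
    exact sum_cnt c.darts (fun d => d.fst) (fun d => d.snd = v)
  have h2 : ∑ u : V, ((c.darts.filter (fun d => d.fst = v ∧ d.snd = u)).length : ℤ)
      = ((c.darts.filter (fun d => d.fst = v)).length : ℤ) := by
    rw [← Nat.cast_sum]
    norm_cast
    have : ∀ u : V, c.darts.filter (fun d => d.fst = v ∧ d.snd = u)
        = c.darts.filter (fun d => d.snd = u ∧ d.fst = v) := by
      intro u
      apply List.filter_congr
      intro d _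
      simp [and_comm]
    rw [Finset.sum_congr rfl fun u _ => by rw [this u]]
    exact sum_cnt c.darts (fun d => d.snd) (fun d => d.fst = v)
  rw [Finset.sum_sub_distrib, h1, h2]
  have := cnt_out_sub_in c v
  simp only [sub_self] at this ⊢
  omega

private lemma cycleFlow_support (c : G.Walk x x) (γ : A) (u v : V)
    (h : cycleFlow c γ u v ≠ 0) : G.Adj u v := by
  unfold cycleFlow at h
  by_cases h1 : (c.darts.filter (fun d => d.fst = u ∧ d.snd = v)) = []
  · by_cases h2 : (c.darts.filter (fun d => d.fst = v ∧ d.snd = u)) = []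
    · rw [h1, h2] at h; simp at h
    · obtain ⟨d, hd⟩ := List.exists_mem_of_ne_nil _ h2
      have := List.of_mem_filter hd
      simp only [decide_eq_true_eq] at this
      have hadj := d.adj
      rw [this.1, this.2] at hadj
      exact hadj.symm
  · obtain ⟨d, hd⟩ := List.exists_mem_of_ne_nil _ h1
    have := List.of_mem_filter hd
    simp only [decide_eq_true_eq] at this
    have hadj := d.adj
    rw [this.1, this.2] at hadj
    exact hadj

private lemma cycleFlow_dart (c : G.Walk x x) (γ : A) (ht : c.IsTrail)
    (d0 : G.Dart) (hd : d0 ∈ c.darts) :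
    cycleFlow c γ d0.fst d0.snd = γ := by
  have hedges : (c.darts.map Dart.edge).Nodup := ht.edges_nodup
  have hnodup : c.darts.Nodup := hedges.of_map
  have hinj := List.inj_on_of_nodup_map hedges
  have h1 : (c.darts.filter (fun d => d.fst = d0.fst ∧ d.snd = d0.snd)).length = 1 := by
    set l' := c.darts.filter (fun d => d.fst = d0.fst ∧ d.snd = d0.snd) with hl'
    have hmem : d0 ∈ l' := List.mem_filter.mpr ⟨hd, by simp⟩
    have hall : ∀ d ∈ l', d0 = d := by
      intro d hdl
      have h := List.of_mem_filter hdl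
      simp only [decide_eq_true_eq] at h
      ext <;> simp [h.1, h.2]
    have hc := List.count_eq_length.mpr hall
    have hle : List.count d0 l' ≤ 1 := List.nodup_iff_count_le_one.mp (hnodup.filter _) d0
    have hpos := List.count_pos_iff.mpr hmem
    omega
  have h2 : (c.darts.filter (fun d => d.fst = d0.snd ∧ d.snd = d0.fst)).length = 0 := by
    rw [List.length_eq_zero_iff]
    rw [List.filter_eq_nil_iff]
    intro d hdl
    simp only [decide_eq_true_eq, not_and]
    intro hf hs
    have hedge : d.edge = d0.edge := by
      unfold Dart.edge
      have : d.toProd = (d0.snd, d0.fst) := by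
        ext <;> simp [hf, hs]
      rw [this]
      exact Sym2.eq_swap
    have := hinj hdl hd hedge
    rw [this] at hf
    exact d0.adj.ne' (hf ▸ rfl)
  rw [cycleFlow, h1, h2]
  simp

private lemma cycleFlow_mapLe {G' : SimpleGraph V} (hle : G ≤ G') (c : G.Walk x x) (γ : A)
    (u v : V) : cycleFlow (c.mapLe hle) γ u v = cycleFlow c γ u v := by
  unfold cycleFlow
  have key : ∀ (a b : V),
      ((c.mapLe hle).darts.filter (fun d => d.fst = a ∧ d.snd = b)).length
      = (c.darts.filter (fun d => d.fst = a ∧ d.snd = b)).length := by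
    intro a b
    rw [Walk.mapLe, Walk.darts_map]
    rw [← List.countP_eq_length_filter, ← List.countP_eq_length_filter, List.countP_map]
    apply List.countP_congr
    intro d _
    simp [Hom.mapDart_apply, SimpleGraph.Hom.ofLE]
    exact ⟨fun h => ⟨of_decide_eq_true h.1, of_decide_eq_true h.2⟩,
      fun h => ⟨decide_eq_true h.1, decide_eq_true h.2⟩⟩
  rw [key, key]
end flow

section findcycle
variable {V : Type*} [Fintype V] [DecidableEq V]

private lemma ext_or_cycle {G : SimpleGraph V}
    (hdeg : ∀ b y : V, G.Adj b y → ∃ x, G.Adj x b ∧ x ≠ y) :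
    ∀ n : ℕ, ∀ (a b y : V) (p' : G.Walk y a) (h : G.Adj b y),
      (Walk.cons h p').IsPath → Fintype.card V ≤ n + (Walk.cons h p').length →
      ∃ (x : V) (c : G.Walk x x), c.IsCycle := by
  intro n
  induction n with
  | zero =>
    intro a b y p' h hp hcard
    exfalso
    have h1 : (Walk.cons h p').support.length ≤ Fintype.card V :=
      hp.support_nodup.length_le_card
    rw [Walk.length_support] at h1
    omega
  | succ n ih =>
    intro a b y p' h hp hcard
    obtain ⟨x, hx, hxy⟩ := hdeg b y h
    by_cases hmem : x ∈ (Walk.cons h p').support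
    · refine ⟨x, Walk.cons hx ((Walk.cons h p').takeUntil x hmem), ?_⟩
      rw [Walk.cons_isCycle_iff]
      refine ⟨hp.takeUntil hmem, fun he => ?_⟩
      have he' := Walk.edges_takeUntil_subset _ hmem he
      rw [Walk.edges_cons] at he'
      rcases List.mem_cons.mp he' with heq | hmm
      · rw [Sym2.eq_iff] at heq
        rcases heq with ⟨h1, h2⟩ | ⟨h1, _⟩
        · exact hx.ne h1
        · exact hxy h1
      · exact (Walk.cons_isPath_iff _ _).mp hp |>.2
          (Walk.snd_mem_support_of_mem_edges p' hmm)
    · apply ih a x b (Walk.cons h p') hx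
      · rw [Walk.cons_isPath_iff]
        exact ⟨hp, hmem⟩
      · rw [Walk.length_cons]
        omega

private lemma exists_cycle' {G : SimpleGraph V}
    (hdeg : ∀ b y : V, G.Adj b y → ∃ x, G.Adj x b ∧ x ≠ y)
    {u0 v0 : V} (h0 : G.Adj u0 v0) : ∃ (x : V) (c : G.Walk x x), c.IsCycle := by
  apply ext_or_cycle hdeg (Fintype.card V) v0 u0 v0 Walk.nil h0
  · rw [Walk.cons_isPath_iff]
    exact ⟨Walk.IsPath.nil, by simp [h0.ne]⟩
  · simp
end findcycle

private lemma combine_flows {V A : Type*} [Fintype V] [DecidableEq V] [AddCommGroup A]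
    {G : SimpleGraph V} (x0 : V) (c0 : G.Walk x0 x0) (γ0 : A) (hc0 : c0.IsCycle)
    (k : ℕ) (x : Fin k → V) (c : ∀ i, G.Walk (x i) (x i)) (γ : Fin k → A)
    (hcyc : ∀ i, (c i).IsCycle) :
    ∃ (k' : ℕ) (x' : Fin k' → V) (c' : ∀ i, G.Walk (x' i) (x' i)) (γ' : Fin k' → A),
      (∀ i, (c' i).IsCycle) ∧
      ∀ u v : V, (∑ i, cycleFlow (c' i) (γ' i) u v)
        = cycleFlow c0 γ0 u v + ∑ i, cycleFlow (c i) (γ i) u v := by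
  set x' : Fin (k + 1) → V := Fin.cons x0 x with hx'
  have hx0 : x' 0 = x0 := Fin.cons_zero _ _
  have hxs : ∀ j : Fin k, x' j.succ = x j := fun j => Fin.cons_succ _ _ _
  set c' : ∀ i : Fin (k + 1), G.Walk (x' i) (x' i) :=
    fun i => Fin.cases (motive := fun i => G.Walk (x' i) (x' i))
      (c0.copy hx0.symm hx0.symm)
      (fun j => (c j).copy (hxs j).symm (hxs j).symm) i with hc'
  have hc'0 : c' 0 = c0.copy hx0.symm hx0.symm := rfl
  have hc's : ∀ j : Fin k, c' j.succ = (c j).copy (hxs j).symm (hxs j).symm :=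
    fun j => by simp [hc']
  refine ⟨k + 1, x', c', Fin.cons γ0 γ, fun i => ?_, fun u v => ?_⟩
  · induction i using Fin.cases with
    | zero => rw [hc'0, Walk.isCycle_copy]; exact hc0
    | succ j => rw [hc's, Walk.isCycle_copy]; exact hcyc j
  · rw [Fin.sum_univ_succ, hc'0]
    have e1 : cycleFlow (c0.copy hx0.symm hx0.symm) ((Fin.cons γ0 γ : Fin (k+1) → A) 0) u v
        = cycleFlow c0 γ0 u v := by
      simp [cycleFlow, Walk.darts_copy]
    have e2 : ∀ j : Fin k, cycleFlow (c' j.succ) ((Fin.cons γ0 γ : Fin (k+1) → A) j.succ) u v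
        = cycleFlow (c j) (γ j) u v := by
      intro j; rw [hc's]; simp [cycleFlow, Walk.darts_copy]
    rw [e1, Finset.sum_congr rfl fun j _ => e2 j]

private lemma main_aux {V A : Type*} [Fintype V] [DecidableEq V] [AddCommGroup A]
    [DecidableEq A] (G : SimpleGraph V) :
    ∀ N : ℕ, ∀ (f : V → V → A), (∀ u v, f u v = - f v u) → (∀ v, f v v = 0) →
      (∀ v, ∑ u : V, f u v = 0) → (∀ u v, f u v ≠ 0 → G.Adj u v) →
      (Finset.univ.filter (fun p : V × V => f p.1 p.2 ≠ 0)).card ≤ N →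
      ∃ (k : ℕ) (x : Fin k → V) (c : ∀ i, G.Walk (x i) (x i)) (γ : Fin k → A),
        (∀ i, (c i).IsCycle) ∧ ∀ u v, f u v = ∑ i, cycleFlow (c i) (γ i) u v := by
  intro N
  induction N with
  | zero =>
    intro f hanti hdiag hdiv hsub hcard
    have hzero : ∀ u v, f u v = 0 := by
      intro u v
      by_contra h
      have : (u, v) ∈ Finset.univ.filter (fun p : V × V => f p.1 p.2 ≠ 0) := by
        simp [h]
      have := Finset.card_pos.mpr ⟨(u, v), this⟩
      omega
    exact ⟨0, Fin.elim0, fun i => i.elim0, Fin.elim0, fun i => i.elim0,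
      fun u v => by simp [hzero]⟩
  | succ N ih =>
    intro f hanti hdiag hdiv hsub hcard
    by_cases hzero : ∀ u v, f u v = 0
    · exact ⟨0, Fin.elim0, fun i => i.elim0, Fin.elim0, fun i => i.elim0,
        fun u v => by simp [hzero]⟩
    push_neg at hzero
    obtain ⟨u0, v0, h0⟩ := hzero
    set H := supportGraph f hanti hdiag with hH
    have hdeg : ∀ b y : V, H.Adj b y → ∃ x, H.Adj x b ∧ x ≠ y := by
      intro b y hby
      by_contra hcon
      push_neg at hcon
      have hyb : f y b ≠ 0 := by
        rw [hanti y b]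
        intro h
        exact hby (by simpa using congrArg Neg.neg h)
      have hsum : ∑ u : V, f u b = f y b := by
        apply Finset.sum_eq_single y
        · intro u _ hu
          by_contra h
          exact hu (hcon u h)
        · intro h
          exact absurd (Finset.mem_univ y) h
      rw [hdiv b] at hsum
      exact hyb hsum.symm
    obtain ⟨z, c, hc⟩ := exists_cycle' hdeg (h0 : H.Adj u0 v0)
    have hlen : c.darts ≠ [] := by
      have := hc.three_le_length
      have hld := c.length_darts
      intro h
      rw [h] at hld
      simp at hld
      omega
    set d0 := c.darts.head hlen with hd0def
    have hd0 : d0 ∈ c.darts := List.head_mem hlen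
    set γ : A := f d0.fst d0.snd with hγdef
    have hγ : γ ≠ 0 := d0.adj
    have hle : H ≤ G := fun u v h => hsub u v h
    set cm := c.mapLe hle with hcm
    have hcmc : cm.IsCycle := hc.mapLe hle
    have hmapflow : ∀ u v, cycleFlow cm γ u v = cycleFlow c γ u v :=
      cycleFlow_mapLe hle c γ
    set g : V → V → A := fun u v => f u v - cycleFlow cm γ u v with hg
    have ganti : ∀ u v, g u v = - g v u := by
      intro u v
      simp only [hg]
      rw [hanti u v, cycleFlow_anti cm γ u v]
      abel
    have gdiag : ∀ v, g v v = 0 := by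
      intro v
      simp only [hg]
      rw [hdiag v, cycleFlow_diag cm γ v]
      simp
    have gdiv : ∀ v, ∑ u : V, g u v = 0 := by
      intro v
      simp only [hg]
      rw [Finset.sum_sub_distrib, hdiv v, cycleFlow_div cm γ v]
      simp
    have gsupp : ∀ u v, g u v ≠ 0 → f u v ≠ 0 := by
      intro u v hguv hfuv
      apply hguv
      simp only [hg, hfuv, zero_sub, neg_eq_zero]
      by_contra hcf
      have : H.Adj u v := by
        rw [hmapflow u v] at hcf
        exact cycleFlow_support c γ u v hcf
      exact this hfuv
    have gsub : ∀ u v, g u v ≠ 0 → G.Adj u v := fun u v h => hsub u v (gsupp u v h)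
    have gkey : g d0.fst d0.snd = 0 := by
      simp only [hg]
      rw [hmapflow, cycleFlow_dart c γ hc.isTrail d0 hd0]
      simp [hγdef]
    have hss : (Finset.univ.filter (fun p : V × V => g p.1 p.2 ≠ 0)) ⊂
        (Finset.univ.filter (fun p : V × V => f p.1 p.2 ≠ 0)) := by
      constructor
      · intro p hp
        rw [Finset.mem_filter] at hp ⊢
        exact ⟨hp.1, gsupp p.1 p.2 hp.2⟩
      · intro hsubs
        have h1 : (d0.fst, d0.snd) ∈ Finset.univ.filter
            (fun p : V × V => f p.1 p.2 ≠ 0) := by simp only [Finset.mem_filter, Finset.mem_univ, true_and]; exact hγ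
        have h2 := hsubs h1
        rw [Finset.mem_filter] at h2
        exact h2.2 gkey
    have hcard' : (Finset.univ.filter (fun p : V × V => g p.1 p.2 ≠ 0)).card ≤ N := by
      have := Finset.card_lt_card hss
      omega
    obtain ⟨k, x, cc, γγ, hcyc, hsum⟩ := ih g ganti gdiag gdiv gsub hcard'
    obtain ⟨k', x', c', γ', hcyc', hsum'⟩ :=
      combine_flows z cm γ hcmc k x cc γγ hcyc
    refine ⟨k', x', c', γ', hcyc', fun u v => ?_⟩
    rw [hsum' u v, ← hsum u v]
    simp [hg]

theorem eq_sum_cycleFlows {V A : Type*} [Fintype V] [DecidableEq V] [AddCommGroup A]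
    (f : V → V → A) (hanti : ∀ u v, f u v = - f v u) (hdiag : ∀ v, f v v = 0)
    (hdiv : ∀ v : V, ∑ u : V, f u v = 0) :
    ∃ (k : ℕ) (x : Fin k → V)
      (c : ∀ i : Fin k, (supportGraph f hanti hdiag).Walk (x i) (x i))
      (γ : Fin k → A),
      (∀ i, (c i).IsCycle) ∧
      ∀ u v, f u v = ∑ i : Fin k, cycleFlow (c i) (γ i) u v := by
  have : DecidableEq A := Classical.decEq A
  exact main_aux (supportGraph f hanti hdiag)
    (Finset.univ.filter (fun p : V × V => f p.1 p.2 ≠ 0)).card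
    f hanti hdiag hdiv (fun u v h => h) le_rfl
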